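/- Let r, c, v, f_1,…,f_m, g, W, Z and the lattice Gibbs measure μ = Z^{-1} e^{-W} ρ^{⊗m} be as in the context. Then μ satisfies the FKG inequality: for all continuous functions H_1, H_2 : ℝ^m → ℝ that are monotonically increasing in each coordinate (with respect to the coordinatewise order on ℝ^m) and exponentially bounded (|H_i(η)| ≤ K e^{κ(|η_1|+⋯+|η_m|)} for some K, κ > 0), one has ∫_{ℝ^m} H_1 H_2 dμ ≥ (∫_{ℝ^m} H_1 dμ)(∫_{ℝ^m} H_2 dμ). -/

import Mathlib

open MeasureTheory

/-- Convolution of two measures on `ℝ` (law of the sum of independent variables). -/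
noncomputable def mconv (μ ν : Measure ℝ) : Measure ℝ :=
  (μ.prod ν).map (fun p => p.1 + p.2)

/-- `n`-fold convolution power of a measure on `ℝ`, with `r^{*0} = δ₀`. -/
noncomputable def convPow (r : Measure ℝ) : ℕ → Measure ℝ
  | 0 => Measure.dirac 0
  | n + 1 => mconv (convPow r n) r

/-- The compound Poisson measure `ρ_{c,r} = e^{-c} ∑_{n} (c^n / n!) r^{*n}`. -/
noncomputable def cPoisson (c : ℝ) (r : Measure ℝ) : Measure ℝ :=
  Measure.sum (fun n : ℕ =>
    ENNReal.ofReal (Real.exp (-c) * c ^ n / n.factorial) • convPow r n)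

open ENNReal

namespace FKGaux


lemma chain_ineq {α β P S : ℝ≥0∞} (hα : α ≤ P) (hβ : β ≤ P) (hm : α * β ≤ P * S) :
    α + β ≤ P + S := by
  rcases eq_or_ne P ⊤ with hP | hPt
  · rw [hP, top_add]; exact le_top
  rcases eq_or_ne S ⊤ with hS | hSt
  · rw [hS, add_top]; exact le_top
  rcases eq_or_ne P 0 with hP0 | hP0
  · have hα0 : α = 0 := le_antisymm (hP0 ▸ hα) zero_le
    have hβ0 : β = 0 := le_antisymm (hP0 ▸ hβ) zero_le
    simp [hα0, hβ0]
  refine (ENNReal.mul_le_mul_iff_right hP0 hPt).mp ?_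
  obtain ⟨a, ha⟩ : ∃ a, P = α + a := ⟨P - α, by rw [add_comm]; exact (tsub_add_cancel_of_le hα).symm⟩
  obtain ⟨e, he⟩ : ∃ e, P = β + e := ⟨P - β, by rw [add_comm]; exact (tsub_add_cancel_of_le hβ).symm⟩
  have e1 : P * α = (β + e) * α := by rw [← he]
  have e2 : P * β = (α + a) * β := by rw [← ha]
  have key2 : (β + e) * α + (α + a) * β + a * e = (α + a) * (β + e) + α * β := by ring
  calc P * (α + β) = P * α + P * β := by ring
    _ = (β + e) * α + (α + a) * β := by rw [e1, e2]
    _ ≤ (β + e) * α + (α + a) * β + a * e := le_self_add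
    _ = (α + a) * (β + e) + α * β := key2
    _ = P * P + α * β := by rw [← ha, ← he]
    _ ≤ P * P + P * S := add_le_add le_rfl hm
    _ = P * (P + S) := by ring

/-- The Ahlswede–Daykin "four functions" inequality on the chain `ℝ`. -/
lemma ad_one (ρ : Measure ℝ) [IsFiniteMeasure ρ]
    (f₁ f₂ f₃ f₄ : ℝ → ℝ≥0∞) (h₁ : Measurable f₁) (h₂ : Measurable f₂)
    (h₃ : Measurable f₃) (h₄ : Measurable f₄)
    (h : ∀ x y, f₁ x * f₂ y ≤ f₃ (x ⊔ y) * f₄ (x ⊓ y)) :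
    (∫⁻ x, f₁ x ∂ρ) * ∫⁻ x, f₂ x ∂ρ ≤ (∫⁻ x, f₃ x ∂ρ) * ∫⁻ x, f₄ x ∂ρ := by
  have go : ∀ x y, x ≤ y → f₁ x * f₂ y + f₁ y * f₂ x ≤ f₃ x * f₄ y + f₃ y * f₄ x := by
    intro x y hxy
    have e1 := h x y
    have e2 := h y x
    rw [sup_eq_right.mpr hxy, inf_eq_left.mpr hxy] at e1
    rw [sup_eq_left.mpr hxy, inf_eq_right.mpr hxy] at e2
    have e3 := h x x; have e4 := h y y
    simp only [sup_idem, inf_idem] at e3 e4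
    have hmm : (f₁ x * f₂ y) * (f₁ y * f₂ x) ≤ (f₃ y * f₄ x) * (f₃ x * f₄ y) := by
      calc (f₁ x * f₂ y) * (f₁ y * f₂ x) = (f₁ x * f₂ x) * (f₁ y * f₂ y) := by ring
        _ ≤ (f₃ x * f₄ x) * (f₃ y * f₄ y) := mul_le_mul' e3 e4
        _ = (f₃ y * f₄ x) * (f₃ x * f₄ y) := by ring
    calc f₁ x * f₂ y + f₁ y * f₂ x ≤ f₃ y * f₄ x + f₃ x * f₄ y := chain_ineq e1 e2 hmm
      _ = f₃ x * f₄ y + f₃ y * f₄ x := add_comm _ _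
  have key : ∀ x y, f₁ x * f₂ y + f₁ y * f₂ x ≤ f₃ x * f₄ y + f₃ y * f₄ x := by
    intro x y
    rcases le_total x y with hxy | hxy
    · exact go x y hxy
    · rw [add_comm (f₁ x * f₂ y), add_comm (f₃ x * f₄ y)]
      exact go y x hxy
  have expand : ∀ (u w : ℝ → ℝ≥0∞), Measurable u → Measurable w →
      ∫⁻ x, ∫⁻ y, (u x * w y + u y * w x) ∂ρ ∂ρ
        = (∫⁻ x, u x ∂ρ) * (∫⁻ x, w x ∂ρ) + (∫⁻ x, u x ∂ρ) * (∫⁻ x, w x ∂ρ) := by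
    intro u w hu hw
    have inner : ∀ x, ∫⁻ y, (u x * w y + u y * w x) ∂ρ
        = u x * (∫⁻ y, w y ∂ρ) + (∫⁻ y, u y ∂ρ) * w x := by
      intro x
      rw [lintegral_add_left (hw.const_mul _)]
      rw [lintegral_const_mul _ hw, lintegral_mul_const _ hu]
    simp_rw [inner]
    rw [lintegral_add_left (hu.mul_const _)]
    rw [lintegral_mul_const _ hu, lintegral_const_mul _ hw]
  have big : (∫⁻ x, f₁ x ∂ρ) * (∫⁻ x, f₂ x ∂ρ) + (∫⁻ x, f₁ x ∂ρ) * (∫⁻ x, f₂ x ∂ρ)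
      ≤ (∫⁻ x, f₃ x ∂ρ) * (∫⁻ x, f₄ x ∂ρ) + (∫⁻ x, f₃ x ∂ρ) * (∫⁻ x, f₄ x ∂ρ) := by
    rw [← expand f₁ f₂ h₁ h₂, ← expand f₃ f₄ h₃ h₄]
    exact lintegral_mono fun x => lintegral_mono fun y => key x y
  have h2 : (2 : ℝ≥0∞) * ((∫⁻ x, f₁ x ∂ρ) * ∫⁻ x, f₂ x ∂ρ)
      ≤ 2 * ((∫⁻ x, f₃ x ∂ρ) * ∫⁻ x, f₄ x ∂ρ) := by
    rw [two_mul, two_mul]; exact big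
  exact (ENNReal.mul_le_mul_iff_right (by norm_num) (by norm_num)).mp h2


lemma measurable_cons {n : ℕ} :
    Measurable (fun p : ℝ × (Fin n → ℝ) => (Fin.cons p.1 p.2 : Fin (n + 1) → ℝ)) := by
  apply measurable_pi_lambda
  intro j
  induction j using Fin.cases with
  | zero => simpa using measurable_fst
  | succ i => simpa [Function.comp_def] using (measurable_pi_apply i).comp measurable_snd

lemma cons_sup {n : ℕ} (s t : ℝ) (x y : Fin n → ℝ) :
    (Fin.cons s x ⊔ Fin.cons t y : Fin (n + 1) → ℝ) = Fin.cons (s ⊔ t) (x ⊔ y) := by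
  funext j
  induction j using Fin.cases with
  | zero => simp [Pi.sup_apply]
  | succ i => simp [Pi.sup_apply]

lemma cons_inf {n : ℕ} (s t : ℝ) (x y : Fin n → ℝ) :
    (Fin.cons s x ⊓ Fin.cons t y : Fin (n + 1) → ℝ) = Fin.cons (s ⊓ t) (x ⊓ y) := by
  funext j
  induction j using Fin.cases with
  | zero => simp [Pi.inf_apply]
  | succ i => simp [Pi.inf_apply]

/-- Decomposition of a lintegral over `Fin (n+1) → ℝ` via the first coordinate. -/
lemma lintegral_pi_succ (ρ : Measure ℝ) [IsFiniteMeasure ρ] (n : ℕ)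
    (f : (Fin (n + 1) → ℝ) → ℝ≥0∞) (hf : Measurable f) :
    ∫⁻ x, f x ∂(Measure.pi fun _ : Fin (n + 1) => ρ)
      = ∫⁻ ζ, ∫⁻ t, f (Fin.cons t ζ) ∂ρ ∂(Measure.pi fun _ : Fin n => ρ) := by
  have mp := (measurePreserving_piFinSuccAbove (fun _ : Fin (n + 1) => ρ) 0).symm
  rw [← mp.lintegral_comp hf]
  have : ∀ p : ℝ × (Fin n → ℝ),
      f ((MeasurableEquiv.piFinSuccAbove (fun _ : Fin (n+1) => ℝ) 0).symm p)
        = f (Fin.cons p.1 p.2) := by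
    intro p
    congr 1
    simp [MeasurableEquiv.piFinSuccAbove_symm_apply, Fin.insertNthEquiv, Fin.insertNth_zero]
  simp_rw [this]
  rw [lintegral_prod (fun p : ℝ × (Fin n → ℝ) => f (Fin.cons p.1 p.2))
    ((hf.comp measurable_cons).aemeasurable)]
  exact lintegral_lintegral_swap ((hf.comp measurable_cons).aemeasurable)

/-- The Ahlswede–Daykin four functions inequality on `ℝⁿ` with product measure. -/
lemma ad_pi (ρ : Measure ℝ) [IsFiniteMeasure ρ] :
    ∀ (n : ℕ) (f₁ f₂ f₃ f₄ : (Fin n → ℝ) → ℝ≥0∞), Measurable f₁ → Measurable f₂ →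
      Measurable f₃ → Measurable f₄ →
      (∀ x y, f₁ x * f₂ y ≤ f₃ (x ⊔ y) * f₄ (x ⊓ y)) →
      (∫⁻ x, f₁ x ∂(Measure.pi fun _ : Fin n => ρ)) * (∫⁻ x, f₂ x ∂(Measure.pi fun _ : Fin n => ρ))
        ≤ (∫⁻ x, f₃ x ∂(Measure.pi fun _ : Fin n => ρ)) *
            ∫⁻ x, f₄ x ∂(Measure.pi fun _ : Fin n => ρ) := by
  intro n
  induction n with
  | zero =>
    intro f₁ f₂ f₃ f₄ h₁ h₂ h₃ h₄ h
    rw [Measure.pi_of_empty]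
    rw [lintegral_dirac' _ h₁, lintegral_dirac' _ h₂, lintegral_dirac' _ h₃,
      lintegral_dirac' _ h₄]
    simpa using h isEmptyElim isEmptyElim
  | succ n IH =>
    intro f₁ f₂ f₃ f₄ h₁ h₂ h₃ h₄ h
    have mcons : ∀ ζ : Fin n → ℝ, Measurable (fun t : ℝ => (Fin.cons t ζ : Fin (n+1) → ℝ)) := by
      intro ζ
      exact measurable_cons.comp (measurable_id.prodMk measurable_const)
    set F₁ := fun ζ : Fin n → ℝ => ∫⁻ t, f₁ (Fin.cons t ζ) ∂ρ with hF₁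
    set F₂ := fun ζ : Fin n → ℝ => ∫⁻ t, f₂ (Fin.cons t ζ) ∂ρ with hF₂
    set F₃ := fun ζ : Fin n → ℝ => ∫⁻ t, f₃ (Fin.cons t ζ) ∂ρ with hF₃
    set F₄ := fun ζ : Fin n → ℝ => ∫⁻ t, f₄ (Fin.cons t ζ) ∂ρ with hF₄
    have hmF : ∀ (f : (Fin (n+1) → ℝ) → ℝ≥0∞), Measurable f →
        Measurable (fun ζ : Fin n → ℝ => ∫⁻ t, f (Fin.cons t ζ) ∂ρ) := by
      intro f hf
      exact Measurable.lintegral_prod_right'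
        (f := fun q : (Fin n → ℝ) × ℝ => f (Fin.cons q.2 q.1))
        (hf.comp (measurable_cons.comp measurable_swap))
    have hcond : ∀ ζ ζ', F₁ ζ * F₂ ζ' ≤ F₃ (ζ ⊔ ζ') * F₄ (ζ ⊓ ζ') := by
      intro ζ ζ'
      refine ad_one ρ _ _ _ _ (h₁.comp (mcons ζ)) (h₂.comp (mcons ζ'))
        (h₃.comp (mcons (ζ ⊔ ζ'))) (h₄.comp (mcons (ζ ⊓ ζ'))) ?_
      intro s t
      rw [← cons_sup, ← cons_inf]
      exact h _ _
    rw [lintegral_pi_succ ρ n f₁ h₁, lintegral_pi_succ ρ n f₂ h₂,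
      lintegral_pi_succ ρ n f₃ h₃, lintegral_pi_succ ρ n f₄ h₄]
    exact IH F₁ F₂ F₃ F₄ (hmF f₁ h₁) (hmF f₂ h₂) (hmF f₃ h₃) (hmF f₄ h₄) hcond

/-- Product of a fixed function of the coordinates integrates to a power. -/
lemma lintegral_pi_pow (ρ : Measure ℝ) [IsFiniteMeasure ρ] (F : ℝ → ℝ≥0∞)
    (hF : Measurable F) :
    ∀ n : ℕ, ∫⁻ x, (∏ j, F (x j)) ∂(Measure.pi fun _ : Fin n => ρ)
      = (∫⁻ t, F t ∂ρ) ^ n := by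
  intro n
  induction n with
  | zero =>
    rw [Measure.pi_of_empty]
    simp only [Finset.univ_eq_empty, Finset.prod_empty]
    rw [lintegral_dirac' _ measurable_const]
    simp
  | succ n IH =>
    have hmeas : Measurable fun x : Fin (n+1) → ℝ => ∏ j, F (x j) := by
      apply Finset.measurable_prod
      intro j _
      exact hF.comp (measurable_pi_apply j)
    rw [lintegral_pi_succ ρ n _ hmeas]
    have : ∀ ζ : Fin n → ℝ, ∫⁻ t, (∏ j, F ((Fin.cons t ζ : Fin (n+1) → ℝ) j)) ∂ρ
        = (∫⁻ t, F t ∂ρ) * ∏ j, F (ζ j) := by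
      intro ζ
      have : ∀ t : ℝ, (∏ j, F ((Fin.cons t ζ : Fin (n+1) → ℝ) j))
          = F t * ∏ j : Fin n, F (ζ j) := by
        intro t
        rw [Fin.prod_univ_succ]
        simp
      simp_rw [this]
      rw [lintegral_mul_const _ hF]
    simp_rw [this]
    have hm2 : Measurable fun ζ : Fin n → ℝ => ∏ j, F (ζ j) :=
      Finset.measurable_prod _ fun j _ => hF.comp (measurable_pi_apply j)
    rw [lintegral_const_mul _ hm2, IH, ← pow_succ']

/-- FKG inequality for bounded nonnegative monotone functions, with respect to a product
measure with a log-supermodular density `φ` (unnormalized form). -/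
lemma cov_bounded (m : ℕ) (ρ : Measure ℝ) [IsFiniteMeasure ρ]
    (φ F G : (Fin m → ℝ) → ℝ) (hφm : Measurable φ) (hφ0 : ∀ x, 0 ≤ φ x)
    (hφi : Integrable φ (Measure.pi fun _ : Fin m => ρ))
    (hφsup : ∀ x y, φ x * φ y ≤ φ (x ⊔ y) * φ (x ⊓ y))
    (hFm : Measurable F) (hGm : Measurable G) (hFmono : Monotone F) (hGmono : Monotone G)
    (hF0 : ∀ x, 0 ≤ F x) (hG0 : ∀ x, 0 ≤ G x)
    {B : ℝ} (hFB : ∀ x, F x ≤ B) (hGB : ∀ x, G x ≤ B) :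
    (∫ x, F x * φ x ∂(Measure.pi fun _ : Fin m => ρ))
        * ∫ x, G x * φ x ∂(Measure.pi fun _ : Fin m => ρ)
      ≤ (∫ x, F x * G x * φ x ∂(Measure.pi fun _ : Fin m => ρ))
        * ∫ x, φ x ∂(Measure.pi fun _ : Fin m => ρ) := by
  set π := (Measure.pi fun _ : Fin m => ρ) with hπ
  have hFφi : Integrable (fun x => F x * φ x) π := by
    refine Integrable.mono' (hφi.const_mul B) ((hFm.mul hφm).aestronglyMeasurable) ?_
    filter_upwards with x
    rw [Real.norm_eq_abs, abs_of_nonneg (mul_nonneg (hF0 x) (hφ0 x))]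
    exact mul_le_mul_of_nonneg_right (hFB x) (hφ0 x)
  have hGφi : Integrable (fun x => G x * φ x) π := by
    refine Integrable.mono' (hφi.const_mul B) ((hGm.mul hφm).aestronglyMeasurable) ?_
    filter_upwards with x
    rw [Real.norm_eq_abs, abs_of_nonneg (mul_nonneg (hG0 x) (hφ0 x))]
    exact mul_le_mul_of_nonneg_right (hGB x) (hφ0 x)
  have hFGφi : Integrable (fun x => F x * G x * φ x) π := by
    refine Integrable.mono' (hφi.const_mul (B * B))
      (((hFm.mul hGm).mul hφm).aestronglyMeasurable) ?_
    filter_upwards with x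
    rw [Real.norm_eq_abs, abs_of_nonneg (mul_nonneg (mul_nonneg (hF0 x) (hG0 x)) (hφ0 x))]
    exact mul_le_mul_of_nonneg_right
      (mul_le_mul (hFB x) (hGB x) (hG0 x) (le_trans (hF0 x) (hFB x))) (hφ0 x)
  have had := ad_pi ρ m
    (fun x => ENNReal.ofReal (F x * φ x)) (fun x => ENNReal.ofReal (G x * φ x))
    (fun x => ENNReal.ofReal (F x * G x * φ x)) (fun x => ENNReal.ofReal (φ x))
    ((hFm.mul hφm).ennreal_ofReal) ((hGm.mul hφm).ennreal_ofReal)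
    (((hFm.mul hGm).mul hφm).ennreal_ofReal) (hφm.ennreal_ofReal) ?_
  · have c1 := ofReal_integral_eq_lintegral_ofReal hFφi
      (Filter.Eventually.of_forall fun x => mul_nonneg (hF0 x) (hφ0 x))
    have c2 := ofReal_integral_eq_lintegral_ofReal hGφi
      (Filter.Eventually.of_forall fun x => mul_nonneg (hG0 x) (hφ0 x))
    have c3 := ofReal_integral_eq_lintegral_ofReal hFGφi
      (Filter.Eventually.of_forall fun x =>
        mul_nonneg (mul_nonneg (hF0 x) (hG0 x)) (hφ0 x))
    have c4 := ofReal_integral_eq_lintegral_ofReal hφi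
      (Filter.Eventually.of_forall hφ0)
    rw [← c1, ← c2, ← c3, ← c4] at had
    rw [← ENNReal.ofReal_mul (integral_nonneg fun x => mul_nonneg (hF0 x) (hφ0 x)),
      ← ENNReal.ofReal_mul (integral_nonneg fun x =>
        mul_nonneg (mul_nonneg (hF0 x) (hG0 x)) (hφ0 x))] at had
    exact (ENNReal.ofReal_le_ofReal_iff (mul_nonneg
      (integral_nonneg fun x => mul_nonneg (mul_nonneg (hF0 x) (hG0 x)) (hφ0 x))
      (integral_nonneg hφ0))).mp had
  · intro x y
    have h1 : F x ≤ F (x ⊔ y) := hFmono le_sup_left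
    have h2 : G y ≤ G (x ⊔ y) := hGmono le_sup_right
    have hr : (F x * φ x) * (G y * φ y)
        ≤ (F (x ⊔ y) * G (x ⊔ y) * φ (x ⊔ y)) * φ (x ⊓ y) := by
      have hFG : F x * G y ≤ F (x ⊔ y) * G (x ⊔ y) :=
        mul_le_mul h1 h2 (hG0 y) (le_trans (hF0 x) h1)
      calc (F x * φ x) * (G y * φ y) = (F x * G y) * (φ x * φ y) := by ring
        _ ≤ (F (x ⊔ y) * G (x ⊔ y)) * (φ (x ⊔ y) * φ (x ⊓ y)) :=
          mul_le_mul hFG (hφsup x y) (mul_nonneg (hφ0 x) (hφ0 y))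
            (mul_nonneg (hF0 _) (hG0 _))
        _ = (F (x ⊔ y) * G (x ⊔ y) * φ (x ⊔ y)) * φ (x ⊓ y) := by ring
    calc ENNReal.ofReal (F x * φ x) * ENNReal.ofReal (G y * φ y)
        = ENNReal.ofReal ((F x * φ x) * (G y * φ y)) :=
          (ENNReal.ofReal_mul (mul_nonneg (hF0 x) (hφ0 x))).symm
      _ ≤ ENNReal.ofReal ((F (x ⊔ y) * G (x ⊔ y) * φ (x ⊔ y)) * φ (x ⊓ y)) :=
          ENNReal.ofReal_le_ofReal hr
      _ = ENNReal.ofReal (F (x ⊔ y) * G (x ⊔ y) * φ (x ⊔ y)) * ENNReal.ofReal (φ (x ⊓ y)) :=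
          ENNReal.ofReal_mul (mul_nonneg (mul_nonneg (hF0 _) (hG0 _)) (hφ0 _))


lemma convPow_prob (r : Measure ℝ) [IsProbabilityMeasure r] (n : ℕ) :
    IsProbabilityMeasure (convPow r n) := by
  induction n with
  | zero => exact Measure.dirac.isProbabilityMeasure
  | succ n IH =>
    have : IsProbabilityMeasure ((convPow r n).prod r) := by
      haveI := IH; infer_instance
    exact Measure.isProbabilityMeasure_map (measurable_add.aemeasurable)

lemma tsum_expSeries (c : ℝ) : ∑' n : ℕ, c ^ n / (n.factorial : ℝ) = Real.exp c := by
  rw [Real.exp_eq_exp_ℝ, NormedSpace.exp_eq_tsum_div]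

lemma cPoisson_prob {c : ℝ} (hc : 0 ≤ c) (r : Measure ℝ) [IsProbabilityMeasure r] :
    IsProbabilityMeasure (cPoisson c r) := by
  constructor
  rw [cPoisson, Measure.sum_apply _ MeasurableSet.univ]
  have : ∀ n : ℕ, (ENNReal.ofReal (Real.exp (-c) * c ^ n / n.factorial) • convPow r n) Set.univ
      = ENNReal.ofReal (Real.exp (-c) * (c ^ n / n.factorial)) := by
    intro n
    haveI := convPow_prob r n
    rw [Measure.smul_apply, measure_univ, smul_eq_mul, mul_one, mul_div_assoc]
  rw [tsum_congr this]
  rw [← ENNReal.ofReal_tsum_of_nonneg]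
  · rw [tsum_mul_left, tsum_expSeries, ← Real.exp_add]
    simp
  · intro n
    have h1 : (0:ℝ) ≤ c ^ n := pow_nonneg hc n
    positivity
  · exact (Real.summable_pow_div_factorial c).mul_left _

lemma lint_exp_convPow (r : Measure ℝ) [IsProbabilityMeasure r] {C : ℝ}
    (hsupp : r (Set.Icc (-C) C)ᶜ = 0) {κ : ℝ} (hκ : 0 ≤ κ) :
    ∀ n : ℕ, ∫⁻ t, ENNReal.ofReal (Real.exp (κ * |t|)) ∂(convPow r n)
      ≤ ENNReal.ofReal (Real.exp (κ * C)) ^ n := by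
  have hr : ∫⁻ t, ENNReal.ofReal (Real.exp (κ * |t|)) ∂r ≤ ENNReal.ofReal (Real.exp (κ * C)) := by
    have hb : ∀ᵐ t ∂r, ENNReal.ofReal (Real.exp (κ * |t|)) ≤ ENNReal.ofReal (Real.exp (κ * C)) := by
      refine (ae_iff.mpr ?_)
      refine measure_mono_null ?_ hsupp
      intro t ht
      simp only [Set.mem_setOf_eq, not_le] at ht
      intro htI
      rcases Set.mem_Icc.mp htI with ⟨h1, h2⟩
      have habs : |t| ≤ C := abs_le.mpr ⟨h1, h2⟩
      exact absurd (ENNReal.ofReal_le_ofReal (Real.exp_le_exp.mpr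
        (mul_le_mul_of_nonneg_left habs hκ))) (not_le.mpr ht)
    calc ∫⁻ t, ENNReal.ofReal (Real.exp (κ * |t|)) ∂r
        ≤ ∫⁻ _, ENNReal.ofReal (Real.exp (κ * C)) ∂r := lintegral_mono_ae hb
      _ = ENNReal.ofReal (Real.exp (κ * C)) := by simp
  intro n
  induction n with
  | zero =>
    rw [show convPow r 0 = Measure.dirac 0 from rfl]
    rw [lintegral_dirac' _ (by fun_prop)]
    simp
  | succ n IH =>
    haveI := convPow_prob r n
    rw [show convPow r (n+1) = mconv (convPow r n) r from rfl, mconv]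
    rw [lintegral_map (by fun_prop) measurable_add]
    have hmono : ∀ p : ℝ × ℝ, ENNReal.ofReal (Real.exp (κ * |p.1 + p.2|))
        ≤ ENNReal.ofReal (Real.exp (κ * |p.1|)) * ENNReal.ofReal (Real.exp (κ * |p.2|)) := by
      intro p
      rw [← ENNReal.ofReal_mul (Real.exp_nonneg _), ← Real.exp_add, ← mul_add]
      exact ENNReal.ofReal_le_ofReal (Real.exp_le_exp.mpr
        (mul_le_mul_of_nonneg_left (abs_add_le _ _) hκ))
    calc ∫⁻ p : ℝ × ℝ, ENNReal.ofReal (Real.exp (κ * |p.1 + p.2|)) ∂((convPow r n).prod r)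
        ≤ ∫⁻ p : ℝ × ℝ, ENNReal.ofReal (Real.exp (κ * |p.1|))
            * ENNReal.ofReal (Real.exp (κ * |p.2|)) ∂((convPow r n).prod r) :=
          lintegral_mono hmono
      _ = (∫⁻ t, ENNReal.ofReal (Real.exp (κ * |t|)) ∂(convPow r n))
            * ∫⁻ t, ENNReal.ofReal (Real.exp (κ * |t|)) ∂r :=
          lintegral_prod_mul (by fun_prop : Measurable fun t : ℝ =>
            ENNReal.ofReal (Real.exp (κ * |t|))).aemeasurable
            ((by fun_prop : Measurable fun t : ℝ =>
            ENNReal.ofReal (Real.exp (κ * |t|))).aemeasurable)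
      _ ≤ ENNReal.ofReal (Real.exp (κ * C)) ^ n * ENNReal.ofReal (Real.exp (κ * C)) :=
          mul_le_mul' IH hr
      _ = ENNReal.ofReal (Real.exp (κ * C)) ^ (n + 1) := (pow_succ _ _).symm

lemma lint_exp_cPoisson (r : Measure ℝ) [IsProbabilityMeasure r] {C : ℝ}
    (hsupp : r (Set.Icc (-C) C)ᶜ = 0) {c κ : ℝ} (hc : 0 < c) (hκ : 0 ≤ κ) :
    ∫⁻ t, ENNReal.ofReal (Real.exp (κ * |t|)) ∂(cPoisson c r) ≠ ⊤ := by
  rw [cPoisson, lintegral_sum_measure]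
  have hb : ∀ n : ℕ, ∫⁻ t, ENNReal.ofReal (Real.exp (κ * |t|))
      ∂(ENNReal.ofReal (Real.exp (-c) * c ^ n / n.factorial) • convPow r n)
      ≤ ENNReal.ofReal (Real.exp (-c) * (c * Real.exp (κ * C)) ^ n / n.factorial) := by
    intro n
    rw [lintegral_smul_measure]
    calc ENNReal.ofReal (Real.exp (-c) * c ^ n / n.factorial)
          * ∫⁻ t, ENNReal.ofReal (Real.exp (κ * |t|)) ∂(convPow r n)
        ≤ ENNReal.ofReal (Real.exp (-c) * c ^ n / n.factorial)
          * ENNReal.ofReal (Real.exp (κ * C)) ^ n :=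
          mul_le_mul' le_rfl (lint_exp_convPow r hsupp hκ n)
      _ = ENNReal.ofReal (Real.exp (-c) * (c * Real.exp (κ * C)) ^ n / n.factorial) := by
          rw [← ENNReal.ofReal_pow (Real.exp_nonneg _),
            ← ENNReal.ofReal_mul (by positivity)]
          congr 1
          rw [mul_pow]
          ring
  have hsum : Summable (fun n : ℕ => Real.exp (-c) * (c * Real.exp (κ * C)) ^ n / n.factorial) := by
    refine ((Real.summable_pow_div_factorial (c * Real.exp (κ * C))).mul_left
      (Real.exp (-c))).congr fun n => ?_
    ring
  have hnn : ∀ n : ℕ, 0 ≤ Real.exp (-c) * (c * Real.exp (κ * C)) ^ n / n.factorial := by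
    intro n
    have h1 : (0:ℝ) ≤ (c * Real.exp (κ * C)) ^ n :=
      pow_nonneg (mul_nonneg hc.le (Real.exp_nonneg _)) n
    positivity
  refine ne_top_of_le_ne_top ?_ (ENNReal.tsum_le_tsum hb)
  rw [← ENNReal.ofReal_tsum_of_nonneg hnn hsum]
  exact ENNReal.ofReal_ne_top


lemma concave_four {v : ℝ → ℝ} (hv : ConcaveOn ℝ Set.univ v) {p q u w : ℝ}
    (hup : p ≤ u) (huq : q ≤ u) (hsum : u + w = p + q) : v u + v w ≤ v p + v q := by
  have hwp : w ≤ p := by linarith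
  have hwu : w ≤ u := by linarith
  rcases eq_or_lt_of_le hwu with heq | hlt
  · have hpu : p = u := by linarith
    have hqw : q = w := by linarith
    rw [hpu, hqw]
  · set lam := (u - p) / (u - w) with hlam
    have hne : u - w ≠ 0 := by linarith
    have hl0 : 0 ≤ lam := div_nonneg (by linarith) (by linarith)
    have hl1 : lam ≤ 1 := (div_le_one (by linarith)).mpr (by linarith)
    have hmul : lam * (u - w) = u - p := div_mul_cancel₀ _ hne
    have hp : p = lam * w + (1 - lam) * u := by nlinarith [hmul]
    have hq : q = (1 - lam) * w + lam * u := by nlinarith [hmul]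
    have h1 : lam • v w + (1 - lam) • v u ≤ v (lam • w + (1 - lam) • u) :=
      hv.2 (Set.mem_univ w) (Set.mem_univ u) hl0 (by linarith) (by ring)
    have h2 : (1 - lam) • v w + lam • v u ≤ v ((1 - lam) • w + lam • u) :=
      hv.2 (Set.mem_univ w) (Set.mem_univ u) (by linarith) hl0 (by ring)
    simp only [smul_eq_mul] at h1 h2
    rw [← hp] at h1
    rw [← hq] at h2
    nlinarith [h1, h2]

lemma concave_of_hyp {v : ℝ → ℝ} (hv : ContDiff ℝ 2 v)
    (hv'' : ∀ t, deriv (deriv v) t ≤ 0) : ConcaveOn ℝ Set.univ v := by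
  have hd1 : Differentiable ℝ v := hv.differentiable (by norm_num)
  have hv2 : ContDiff ℝ (1 + 1) v := by
    norm_num
    exact hv
  have hcd1 : ContDiff ℝ 1 (deriv v) := (contDiff_succ_iff_deriv.mp hv2).2.2
  have hd2 : Differentiable ℝ (deriv v) := hcd1.differentiable one_ne_zero
  exact concaveOn_univ_of_deriv2_nonpos hd1 hd2 (by
    intro x
    simpa [Function.iterate_succ, Function.iterate_zero] using hv'' x)

lemma lipschitz_bound {v : ℝ → ℝ} (hv : ContDiff ℝ 2 v) {b : ℝ} (hb : 0 < b)
    (hv' : ∀ t, |deriv v t| ≤ b) : ∀ s t : ℝ, |v s - v t| ≤ b * |s - t| := by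
  have hd1 : Differentiable ℝ v := hv.differentiable (by norm_num)
  have hlip : LipschitzWith ⟨b, hb.le⟩ v := by
    apply lipschitzWith_of_nnnorm_deriv_le hd1
    intro x
    exact NNReal.coe_le_coe.mp (by simpa [Real.norm_eq_abs] using hv' x : (‖deriv v x‖₊ : ℝ) ≤ b)
  intro s t
  have := hlip.dist_le_mul s t
  rw [Real.dist_eq, Real.dist_eq] at this; exact this


end FKGaux

/-- Proposition 3.4 of the paper: the lattice Gibbs measure
`μ = Z⁻¹ e^{-W} ρ^{⊗m}` with concave energy density satisfies the FKG inequality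
for continuous, coordinatewise monotonically increasing, exponentially bounded
observables. -/
theorem lattice_gibbs_FKG
    (d m : ℕ) (hm : 1 ≤ m) (C : ℝ) (hC : 0 < C)
    (r : Measure ℝ) [IsProbabilityMeasure r] (hsupp : r (Set.Icc (-C) C)ᶜ = 0)
    (c : ℝ) (hc : 0 < c)
    (v : ℝ → ℝ) (hv : ContDiff ℝ 2 v) (hv0 : v 0 = 0)
    (b : ℝ) (hb : 0 < b) (hv' : ∀ t, |deriv v t| ≤ b)
    (hv'' : ∀ t, deriv (deriv v) t ≤ 0)
    (f : Fin m → (Fin d → ℝ) → ℝ) (hf0 : ∀ j x, 0 ≤ f j x)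
    (hfc : ∀ j, Continuous (f j)) (hfs : ∀ j, HasCompactSupport (f j))
    (g : (Fin d → ℝ) → ℝ) (hg0 : ∀ x, 0 ≤ g x)
    (hgc : Continuous g) (hgs : HasCompactSupport g)
    (W : (Fin m → ℝ) → ℝ)
    (hW : ∀ η, W η = ∫ x, v (∑ j, η j * f j x) * g x)
    (Z : ℝ)
    (hZ : Z = ∫ η, Real.exp (-W η) ∂(Measure.pi fun _ : Fin m => cPoisson c r))
    (μ : Measure (Fin m → ℝ))
    (hμ : μ = (Measure.pi fun _ : Fin m => cPoisson c r).withDensity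
      (fun η => ENNReal.ofReal (Real.exp (-W η) / Z))) :
    ∀ H₁ H₂ : (Fin m → ℝ) → ℝ, Continuous H₁ → Continuous H₂ →
      Monotone H₁ → Monotone H₂ →
      (∃ K κ : ℝ, 0 < K ∧ 0 < κ ∧ ∀ η, |H₁ η| ≤ K * Real.exp (κ * ∑ j, |η j|)) →
      (∃ K κ : ℝ, 0 < K ∧ 0 < κ ∧ ∀ η, |H₂ η| ≤ K * Real.exp (κ * ∑ j, |η j|)) →
      ∫ η, H₁ η * H₂ η ∂μ ≥ (∫ η, H₁ η ∂μ) * (∫ η, H₂ η ∂μ) := by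
  intro H₁ H₂ hH₁c hH₂c hH₁m hH₂m hb₁ hb₂
  obtain ⟨K₁, κ₁, hK₁, hκ₁, hB₁⟩ := hb₁
  obtain ⟨K₂, κ₂, hK₂, hκ₂, hB₂⟩ := hb₂
  haveI hcp : IsProbabilityMeasure (cPoisson c r) := FKGaux.cPoisson_prob hc.le r
  set ρm : Measure (Fin m → ℝ) := Measure.pi fun _ : Fin m => cPoisson c r with hρm
  haveI hρmP : IsProbabilityMeasure ρm := by rw [hρm]; infer_instance
  -- basic integrability over the x-space
  have hcx : ∀ η : Fin m → ℝ, Continuous fun x => v (∑ j, η j * f j x) * g x := fun η =>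
    (hv.continuous.comp (continuous_finset_sum _ fun j _ =>
      continuous_const.mul (hfc j))).mul hgc
  have vgint : ∀ η : Fin m → ℝ, Integrable (fun x => v (∑ j, η j * f j x) * g x) := fun η =>
    (hcx η).integrable_of_hasCompactSupport hgs.mul_left
  have fgint : ∀ j, Integrable (fun x => f j x * g x) := fun j =>
    ((hfc j).mul hgc).integrable_of_hasCompactSupport hgs.mul_left
  have hI0 : ∀ j, 0 ≤ ∫ x, f j x * g x := fun j =>
    integral_nonneg fun x => mul_nonneg (hf0 j x) (hg0 x)
  set κ₀ : ℝ := b * ∑ j, ∫ x, f j x * g x with hκ₀def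
  have hκ₀0 : 0 ≤ κ₀ := mul_nonneg hb.le (Finset.sum_nonneg fun j _ => hI0 j)
  have hvabs : ∀ t : ℝ, |v t| ≤ b * |t| := by
    intro t
    have := FKGaux.lipschitz_bound hv hb hv' t 0
    simpa [hv0] using this
  -- growth bound for W
  have hWabs : ∀ η, |W η| ≤ κ₀ * ∑ j, |η j| := by
    intro η
    have hintb : Integrable (fun x => b * ∑ j, |η j| * (f j x * g x)) :=
      (integrable_finset_sum _ fun j _ => (fgint j).const_mul _).const_mul b
    have hpt : ∀ x, ‖v (∑ j, η j * f j x) * g x‖ ≤ b * ∑ j, |η j| * (f j x * g x) := by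
      intro x
      rw [Real.norm_eq_abs, abs_mul, abs_of_nonneg (hg0 x)]
      have h2 : |∑ j, η j * f j x| ≤ ∑ j, |η j| * f j x := by
        refine (Finset.abs_sum_le_sum_abs _ _).trans (Finset.sum_le_sum fun j _ => ?_)
        rw [abs_mul, abs_of_nonneg (hf0 j x)]
      have h1 : |v (∑ j, η j * f j x)| ≤ b * ∑ j, |η j| * f j x :=
        (hvabs _).trans (mul_le_mul_of_nonneg_left h2 hb.le)
      calc |v (∑ j, η j * f j x)| * g x ≤ (b * ∑ j, |η j| * f j x) * g x :=
          mul_le_mul_of_nonneg_right h1 (hg0 x)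
        _ = b * ∑ j, |η j| * (f j x * g x) := by
          rw [mul_assoc, Finset.sum_mul]
          congr 1
          exact Finset.sum_congr rfl fun j _ => by ring
    have step : |W η| ≤ ∫ x, b * ∑ j, |η j| * (f j x * g x) := by
      rw [hW η]
      exact (norm_integral_le_integral_norm _).trans
        (integral_mono (vgint η).norm hintb hpt)
    refine step.trans ?_
    rw [integral_const_mul, integral_finset_sum _ fun j _ => (fgint j).const_mul _]
    simp_rw [integral_const_mul]
    have hstep2 : ∑ j, |η j| * ∫ x, f j x * g x
        ≤ (∑ j, ∫ x, f j x * g x) * ∑ j, |η j| := by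
      calc ∑ j, |η j| * ∫ x, f j x * g x
          ≤ ∑ j, |η j| * ∑ k, ∫ x, f k x * g x := by
            refine Finset.sum_le_sum fun j _ => ?_
            exact mul_le_mul_of_nonneg_left
              (Finset.single_le_sum (fun k _ => hI0 k) (Finset.mem_univ j)) (abs_nonneg _)
        _ = (∑ j, ∫ x, f j x * g x) * ∑ j, |η j| := by
            rw [← Finset.sum_mul, mul_comm]
    calc b * ∑ j, |η j| * ∫ x, f j x * g x
        ≤ b * ((∑ j, ∫ x, f j x * g x) * ∑ j, |η j|) :=
          mul_le_mul_of_nonneg_left hstep2 hb.le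
      _ = κ₀ * ∑ j, |η j| := by rw [hκ₀def]; ring
  -- supermodularity of -W
  have hconc : ConcaveOn ℝ Set.univ v := FKGaux.concave_of_hyp hv hv''
  have hWsup : ∀ η ζ, W (η ⊔ ζ) + W (η ⊓ ζ) ≤ W η + W ζ := by
    intro η ζ
    rw [hW (η ⊔ ζ), hW (η ⊓ ζ), hW η, hW ζ]
    rw [← integral_add (vgint (η ⊔ ζ)) (vgint (η ⊓ ζ)),
      ← integral_add (vgint η) (vgint ζ)]
    refine integral_mono ((vgint (η ⊔ ζ)).add (vgint (η ⊓ ζ)))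
      ((vgint η).add (vgint ζ)) fun x => ?_
    have hup : ∑ j, η j * f j x ≤ ∑ j, (η ⊔ ζ) j * f j x := by
      refine Finset.sum_le_sum fun j _ => ?_
      exact mul_le_mul_of_nonneg_right (by simp [Pi.sup_apply, le_sup_left]) (hf0 j x)
    have huq : ∑ j, ζ j * f j x ≤ ∑ j, (η ⊔ ζ) j * f j x := by
      refine Finset.sum_le_sum fun j _ => ?_
      exact mul_le_mul_of_nonneg_right (by simp [Pi.sup_apply, le_sup_right]) (hf0 j x)
    have hsum4 : (∑ j, (η ⊔ ζ) j * f j x) + ∑ j, (η ⊓ ζ) j * f j x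
        = (∑ j, η j * f j x) + ∑ j, ζ j * f j x := by
      rw [← Finset.sum_add_distrib, ← Finset.sum_add_distrib]
      refine Finset.sum_congr rfl fun j _ => ?_
      rw [Pi.sup_apply, Pi.inf_apply, ← add_mul, ← add_mul]
      congr 1
      exact max_add_min _ _
    have h4 := FKGaux.concave_four hconc hup huq hsum4
    calc v (∑ j, (η ⊔ ζ) j * f j x) * g x + v (∑ j, (η ⊓ ζ) j * f j x) * g x
        = (v (∑ j, (η ⊔ ζ) j * f j x) + v (∑ j, (η ⊓ ζ) j * f j x)) * g x := by ring
      _ ≤ (v (∑ j, η j * f j x) + v (∑ j, ζ j * f j x)) * g x :=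
          mul_le_mul_of_nonneg_right h4 (hg0 x)
      _ = v (∑ j, η j * f j x) * g x + v (∑ j, ζ j * f j x) * g x := by ring
  -- measurability of W
  have hWmeas : Measurable W := by
    have hjoint : Continuous fun p : (Fin m → ℝ) × (Fin d → ℝ) =>
        v (∑ j, p.1 j * f j p.2) * g p.2 := by
      refine Continuous.mul ?_ (hgc.comp continuous_snd)
      exact hv.continuous.comp (continuous_finset_sum _ fun j _ =>
        ((continuous_apply j).comp continuous_fst).mul ((hfc j).comp continuous_snd))
    have hWeq : W = fun η => ∫ x, v (∑ j, η j * f j x) * g x := funext hW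
    rw [hWeq]
    exact (StronglyMeasurable.integral_prod_right' hjoint.stronglyMeasurable).measurable
  have hφm : Measurable fun η : Fin m → ℝ => Real.exp (-W η) :=
    Real.measurable_exp.comp hWmeas.neg
  have hφ0 : ∀ η : Fin m → ℝ, 0 ≤ Real.exp (-W η) := fun η => (Real.exp_pos _).le
  have hφsup : ∀ x y : Fin m → ℝ, Real.exp (-W x) * Real.exp (-W y)
      ≤ Real.exp (-W (x ⊔ y)) * Real.exp (-W (x ⊓ y)) := by
    intro x y
    rw [← Real.exp_add, ← Real.exp_add]
    refine Real.exp_le_exp.mpr ?_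
    have := hWsup x y
    linarith
  -- exponential moments of the product compound Poisson measure
  have hexpcont : ∀ κ : ℝ, Continuous fun η : Fin m → ℝ => Real.exp (κ * ∑ j, |η j|) :=
    fun κ => Real.continuous_exp.comp (continuous_const.mul
      (continuous_finset_sum _ fun j _ => (continuous_apply j).abs))
  have hmom : ∀ κ : ℝ, 0 ≤ κ →
      ∫⁻ η, ENNReal.ofReal (Real.exp (κ * ∑ j, |η j|)) ∂ρm ≠ ⊤ := by
    intro κ hκ
    have heq : (fun η : Fin m → ℝ => ENNReal.ofReal (Real.exp (κ * ∑ j, |η j|)))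
        = fun η => ∏ j, ENNReal.ofReal (Real.exp (κ * |η j|)) := by
      funext η
      rw [Finset.mul_sum, Real.exp_sum,
        ENNReal.ofReal_prod_of_nonneg fun j _ => (Real.exp_pos _).le]
    rw [hρm, heq, FKGaux.lintegral_pi_pow (cPoisson c r) _
      (by fun_prop : Measurable fun t : ℝ => ENNReal.ofReal (Real.exp (κ * |t|))) m]
    exact ENNReal.pow_ne_top (FKGaux.lint_exp_cPoisson r hsupp hc hκ)
  have hexpint : ∀ κ : ℝ, 0 ≤ κ →
      Integrable (fun η : Fin m → ℝ => Real.exp (κ * ∑ j, |η j|)) ρm := by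
    intro κ hκ
    refine ⟨(hexpcont κ).aestronglyMeasurable, ?_⟩
    rw [hasFiniteIntegral_iff_ofReal (Filter.Eventually.of_forall fun η => (Real.exp_pos _).le)]
    exact lt_top_iff_ne_top.mpr (hmom κ hκ)
  have hφle : ∀ η, Real.exp (-W η) ≤ Real.exp (κ₀ * ∑ j, |η j|) := by
    intro η
    refine Real.exp_le_exp.mpr ?_
    have h1 := hWabs η
    have h2 := neg_abs_le (W η)
    linarith
  have hφint : Integrable (fun η => Real.exp (-W η)) ρm := by
    refine Integrable.mono' (hexpint κ₀ hκ₀0) hφm.aestronglyMeasurable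
      (Filter.Eventually.of_forall fun η => ?_)
    rw [Real.norm_eq_abs, abs_of_nonneg (hφ0 η)]
    exact hφle η
  -- positivity of Z
  have hZpos : 0 < Z := by
    rw [hZ]
    rw [integral_pos_iff_support_of_nonneg hφ0 hφint]
    have hsup : Function.support (fun η : Fin m → ℝ => Real.exp (-W η)) = Set.univ :=
      Set.eq_univ_of_forall fun η => (Real.exp_pos _).ne'
    rw [hsup]
    simp
  -- transfer of integrals from μ to ρm
  have hdensm : Measurable fun η : Fin m → ℝ => Real.toNNReal (Real.exp (-W η) / Z) :=
    (hφm.div_const Z).real_toNNReal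
  have htrans : ∀ u : (Fin m → ℝ) → ℝ,
      ∫ η, u η ∂μ = Z⁻¹ * ∫ η, u η * Real.exp (-W η) ∂ρm := by
    intro u
    rw [hμ]
    have hdeq : (fun η => ENNReal.ofReal (Real.exp (-W η) / Z))
        = fun η => ((Real.toNNReal (Real.exp (-W η) / Z) : NNReal) : ℝ≥0∞) := rfl
    rw [hdeq, integral_withDensity_eq_integral_smul hdensm u]
    have hpt : ∀ η, (Real.toNNReal (Real.exp (-W η) / Z)) • u η
        = Z⁻¹ * (u η * Real.exp (-W η)) := by
      intro η
      rw [NNReal.smul_def, Real.coe_toNNReal _ (div_nonneg (hφ0 η) hZpos.le), smul_eq_mul]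
      ring
    simp_rw [hpt]
    rw [integral_const_mul]
  -- μ is a probability measure
  have hμuniv : μ Set.univ = 1 := by
    rw [hμ, withDensity_apply _ MeasurableSet.univ, setLIntegral_univ]
    rw [← ofReal_integral_eq_lintegral_ofReal (hφint.div_const Z)
      (Filter.Eventually.of_forall fun η => div_nonneg (hφ0 η) hZpos.le)]
    rw [integral_div, ← hZ, div_self hZpos.ne']
    exact ENNReal.ofReal_one
  haveI hμP : IsProbabilityMeasure μ := ⟨hμuniv⟩
  -- integrability over μ of exponentially dominated functions
  have hintμ : ∀ (u : (Fin m → ℝ) → ℝ) (K κ : ℝ), 0 ≤ K → 0 ≤ κ → Continuous u →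
      (∀ η, |u η| ≤ K * Real.exp (κ * ∑ j, |η j|)) → Integrable u μ := by
    intro u K κ hK hκ hu hub
    refine ⟨hu.aestronglyMeasurable, ?_⟩
    rw [hasFiniteIntegral_iff_norm, hμ,
      lintegral_withDensity_eq_lintegral_mul _
        ((hφm.div_const Z).ennreal_ofReal) (hu.measurable.norm.ennreal_ofReal)]
    simp only [Pi.mul_apply]
    have hpt : ∀ η, ENNReal.ofReal (Real.exp (-W η) / Z) * ENNReal.ofReal ‖u η‖
        ≤ ENNReal.ofReal (Z⁻¹ * K) * ENNReal.ofReal (Real.exp ((κ₀ + κ) * ∑ j, |η j|)) := by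
      intro η
      rw [← ENNReal.ofReal_mul (div_nonneg (hφ0 η) hZpos.le),
        ← ENNReal.ofReal_mul (mul_nonneg (inv_nonneg.mpr hZpos.le) hK)]
      refine ENNReal.ofReal_le_ofReal ?_
      have h2 : ‖u η‖ ≤ K * Real.exp (κ * ∑ j, |η j|) := by
        rw [Real.norm_eq_abs]; exact hub η
      have h1 : Real.exp (-W η) / Z ≤ Real.exp (κ₀ * ∑ j, |η j|) / Z := by
        gcongr ?_ / Z
        exact hφle η
      calc Real.exp (-W η) / Z * ‖u η‖
          ≤ Real.exp (κ₀ * ∑ j, |η j|) / Z * (K * Real.exp (κ * ∑ j, |η j|)) :=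
            mul_le_mul h1 h2 (norm_nonneg _) (by positivity)
        _ = Z⁻¹ * K * Real.exp ((κ₀ + κ) * ∑ j, |η j|) := by
            rw [add_mul, Real.exp_add]; ring
    calc ∫⁻ η, ENNReal.ofReal (Real.exp (-W η) / Z) * ENNReal.ofReal ‖u η‖ ∂ρm
        ≤ ∫⁻ η, ENNReal.ofReal (Z⁻¹ * K)
            * ENNReal.ofReal (Real.exp ((κ₀ + κ) * ∑ j, |η j|)) ∂ρm := lintegral_mono hpt
      _ = ENNReal.ofReal (Z⁻¹ * K)
            * ∫⁻ η, ENNReal.ofReal (Real.exp ((κ₀ + κ) * ∑ j, |η j|)) ∂ρm :=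
          lintegral_const_mul _ ((hexpcont _).measurable.ennreal_ofReal)
      _ < ⊤ := ENNReal.mul_lt_top ENNReal.ofReal_lt_top
          (lt_top_iff_ne_top.mpr (hmom _ (by positivity)))
  -- covariance inequality for bounded monotone functions
  have covb : ∀ (F G : (Fin m → ℝ) → ℝ) (N : ℝ), 0 ≤ N → Measurable F → Measurable G →
      Monotone F → Monotone G → (∀ x, |F x| ≤ N) → (∀ x, |G x| ≤ N) →
      (∫ η, F η ∂μ) * ∫ η, G η ∂μ ≤ ∫ η, F η * G η ∂μ := by
    intro F G N hN hFm hGm hFmono hGmono hFb hGb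
    have hF0 : ∀ x : Fin m → ℝ, 0 ≤ F x + N := fun x => by have := (abs_le.mp (hFb x)).1; linarith
    have hG0 : ∀ x : Fin m → ℝ, 0 ≤ G x + N := fun x => by have := (abs_le.mp (hGb x)).1; linarith
    have hFB : ∀ x : Fin m → ℝ, F x + N ≤ N + N := fun x => by have := (abs_le.mp (hFb x)).2; linarith
    have hGB : ∀ x : Fin m → ℝ, G x + N ≤ N + N := fun x => by have := (abs_le.mp (hGb x)).2; linarith
    have key := FKGaux.cov_bounded m (cPoisson c r) (fun η => Real.exp (-W η))
      (fun x => F x + N) (fun x => G x + N) hφm hφ0 (by rw [← hρm]; exact hφint) hφsup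
      (hFm.add_const N) (hGm.add_const N) (hFmono.add_const N) (hGmono.add_const N)
      hF0 hG0 (B := N + N) hFB hGB
    rw [← hρm] at key
    beta_reduce at key
    have eF : ∫ η, (F η + N) * Real.exp (-W η) ∂ρm = Z * ∫ η, (F η + N) ∂μ := by
      rw [htrans fun η => F η + N, ← mul_assoc, mul_inv_cancel₀ hZpos.ne', one_mul]
    have eG : ∫ η, (G η + N) * Real.exp (-W η) ∂ρm = Z * ∫ η, (G η + N) ∂μ := by
      rw [htrans fun η => G η + N, ← mul_assoc, mul_inv_cancel₀ hZpos.ne', one_mul]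
    have eFG : ∫ η, (F η + N) * (G η + N) * Real.exp (-W η) ∂ρm
        = Z * ∫ η, (F η + N) * (G η + N) ∂μ := by
      rw [htrans fun η => (F η + N) * (G η + N), ← mul_assoc,
        mul_inv_cancel₀ hZpos.ne', one_mul]
    have eφ : ∫ η, Real.exp (-W η) ∂ρm = Z := hZ.symm
    rw [eF, eG, eFG, eφ] at key
    have hFint : Integrable F μ := (integrable_const N).mono' hFm.aestronglyMeasurable
      (Filter.Eventually.of_forall fun x => by rw [Real.norm_eq_abs]; exact hFb x)
    have hGint : Integrable G μ := (integrable_const N).mono' hGm.aestronglyMeasurable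
      (Filter.Eventually.of_forall fun x => by rw [Real.norm_eq_abs]; exact hGb x)
    have hFGint : Integrable (fun η => F η * G η) μ :=
      (integrable_const (N * N)).mono' (hFm.mul hGm).aestronglyMeasurable
        (Filter.Eventually.of_forall fun x => by
          rw [Real.norm_eq_abs, abs_mul]
          exact mul_le_mul (hFb x) (hGb x) (abs_nonneg _) hN)
    have ea : ∫ η, (F η + N) ∂μ = (∫ η, F η ∂μ) + N := by
      rw [integral_add hFint (integrable_const N), integral_const]
      simp
    have eb : ∫ η, (G η + N) ∂μ = (∫ η, G η ∂μ) + N := by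
      rw [integral_add hGint (integrable_const N), integral_const]
      simp
    have ec : ∫ η, (F η + N) * (G η + N) ∂μ
        = (∫ η, F η * G η ∂μ) + N * ∫ η, G η ∂μ + N * ∫ η, F η ∂μ + N * N := by
      have hre : (fun η => (F η + N) * (G η + N))
          = fun η => F η * G η + N * G η + N * F η + N * N := by
        funext η; ring
      rw [hre]
      have i1 : Integrable (fun η => F η * G η + N * G η) μ := hFGint.add (hGint.const_mul N)
      have i2 : Integrable (fun η => F η * G η + N * G η + N * F η) μ :=
        i1.add (hFint.const_mul N)
      rw [integral_add i2 (integrable_const _), integral_add i1 (hFint.const_mul N),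
        integral_add hFGint (hGint.const_mul N), integral_const_mul, integral_const_mul,
        integral_const]
      simp
    rw [ea, eb, ec] at key
    nlinarith [key, mul_pos hZpos hZpos]
  -- truncations
  set T : ℕ → ℝ → ℝ := fun N y => max (-(N : ℝ)) (min y (N : ℝ)) with hT
  have hTmono : ∀ N, Monotone (T N) := fun N =>
    monotone_const.max (monotone_id.min monotone_const)
  have hTcont : ∀ N, Continuous (T N) := fun N =>
    continuous_const.max (continuous_id.min continuous_const)
  have hTabs1 : ∀ (N : ℕ) (y : ℝ), |T N y| ≤ (N : ℝ) := by
    intro N y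
    refine abs_le.mpr ⟨le_max_left _ _, max_le ?_ (min_le_right _ _)⟩
    exact (neg_nonpos.mpr (Nat.cast_nonneg N)).trans (Nat.cast_nonneg N)
  have hTabs2 : ∀ (N : ℕ) (y : ℝ), |T N y| ≤ |y| := by
    intro N y
    refine abs_le.mpr ⟨?_, max_le ((neg_nonpos.mpr (Nat.cast_nonneg N)).trans (abs_nonneg y))
      ((min_le_left _ _).trans (le_abs_self y))⟩
    refine le_trans (le_min (neg_abs_le y)
      ((neg_nonpos.mpr (abs_nonneg y)).trans (Nat.cast_nonneg N))) ?_
    exact (min_le_min_left _ (le_refl (N : ℝ))).trans (le_max_right _ _)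
  have hTlim : ∀ y : ℝ, Filter.Tendsto (fun N : ℕ => T N y) Filter.atTop (nhds y) := by
    intro y
    refine Filter.Tendsto.congr' ?_ tendsto_const_nhds
    filter_upwards [Filter.eventually_ge_atTop ⌈|y|⌉₊] with N hN
    have hy : |y| ≤ (N : ℝ) := (Nat.le_ceil _).trans (by exact_mod_cast hN)
    obtain ⟨hy1, hy2⟩ := abs_le.mp hy
    simp only [hT]
    rw [min_eq_left hy2, max_eq_right (by linarith : -(N : ℝ) ≤ y)]
  -- dominated convergence
  have hbound₁ : Integrable (fun η => K₁ * Real.exp (κ₁ * ∑ j, |η j|)) μ := by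
    refine hintμ _ K₁ κ₁ hK₁.le hκ₁.le (continuous_const.mul (hexpcont κ₁)) fun η => ?_
    rw [abs_of_nonneg (by positivity)]
  have hbound₂ : Integrable (fun η => K₂ * Real.exp (κ₂ * ∑ j, |η j|)) μ := by
    refine hintμ _ K₂ κ₂ hK₂.le hκ₂.le (continuous_const.mul (hexpcont κ₂)) fun η => ?_
    rw [abs_of_nonneg (by positivity)]
  have hbound₁₂ : Integrable (fun η => K₁ * K₂ * Real.exp ((κ₁ + κ₂) * ∑ j, |η j|)) μ := by
    refine hintμ _ (K₁ * K₂) (κ₁ + κ₂) (by positivity) (by positivity)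
      (continuous_const.mul (hexpcont (κ₁ + κ₂))) fun η => ?_
    rw [abs_of_nonneg (by positivity)]
  have t1 : Filter.Tendsto (fun N : ℕ => ∫ η, T N (H₁ η) ∂μ) Filter.atTop
      (nhds (∫ η, H₁ η ∂μ)) := by
    refine tendsto_integral_of_dominated_convergence _
      (fun N => ((hTcont N).comp hH₁c).aestronglyMeasurable) hbound₁
      (fun N => Filter.Eventually.of_forall fun η => ?_)
      (Filter.Eventually.of_forall fun η => hTlim (H₁ η))
    rw [Real.norm_eq_abs]
    exact (hTabs2 N _).trans (hB₁ η)
  have t2 : Filter.Tendsto (fun N : ℕ => ∫ η, T N (H₂ η) ∂μ) Filter.atTop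
      (nhds (∫ η, H₂ η ∂μ)) := by
    refine tendsto_integral_of_dominated_convergence _
      (fun N => ((hTcont N).comp hH₂c).aestronglyMeasurable) hbound₂
      (fun N => Filter.Eventually.of_forall fun η => ?_)
      (Filter.Eventually.of_forall fun η => hTlim (H₂ η))
    rw [Real.norm_eq_abs]
    exact (hTabs2 N _).trans (hB₂ η)
  have t12 : Filter.Tendsto (fun N : ℕ => ∫ η, T N (H₁ η) * T N (H₂ η) ∂μ) Filter.atTop
      (nhds (∫ η, H₁ η * H₂ η ∂μ)) := by
    refine tendsto_integral_of_dominated_convergence _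
      (fun N => (((hTcont N).comp hH₁c).mul ((hTcont N).comp hH₂c)).aestronglyMeasurable)
      hbound₁₂ (fun N => Filter.Eventually.of_forall fun η => ?_)
      (Filter.Eventually.of_forall fun η => (hTlim (H₁ η)).mul (hTlim (H₂ η)))
    rw [Real.norm_eq_abs, abs_mul]
    calc |T N (H₁ η)| * |T N (H₂ η)|
        ≤ (K₁ * Real.exp (κ₁ * ∑ j, |η j|)) * (K₂ * Real.exp (κ₂ * ∑ j, |η j|)) :=
          mul_le_mul ((hTabs2 N _).trans (hB₁ η)) ((hTabs2 N _).trans (hB₂ η))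
            (abs_nonneg _) (by positivity)
      _ = K₁ * K₂ * Real.exp ((κ₁ + κ₂) * ∑ j, |η j|) := by
          rw [add_mul, Real.exp_add]; ring
  rw [ge_iff_le]
  refine le_of_tendsto_of_tendsto' (t1.mul t2) t12 fun N => ?_
  exact covb (fun η => T N (H₁ η)) (fun η => T N (H₂ η)) N (Nat.cast_nonneg N)
    (((hTcont N).comp hH₁c).measurable) (((hTcont N).comp hH₂c).measurable)
    ((hTmono N).comp hH₁m) ((hTmono N).comp hH₂m)
    (fun η => hTabs1 N _) (fun η => hTabs1 N _)
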